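/- Certificate decrease for dual-averaged policy iteration: let (π_k, Q̄_k) be a DPI sequence with stepsizes β_0 = 1 and β_k ∈ (0,1] for k ≥ 1. Then for every k ≥ 1, ‖Q* − H^{π_k}(Q*)‖∞ ≤ (2γ/(1−γ)) · ∏_{i=1}^{k−1} (1 − (1−γ)β_i) · ‖Q* − H^{π_0}(Q*)‖∞. -/
import Mathlib


open Finset

noncomputable section

/-- A finite discounted MDP: transition kernel `p`, reward `R` in `[0,1]`,
discount factor `γ ∈ (0,1)`. -/
structure MDP (S A : Type*) [Fintype S] [Fintype A] where
  p : S → A → S → ℝ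
  R : S → A → ℝ
  γ : ℝ
  hp : ∀ s a, p s a ∈ stdSimplex ℝ S
  hR : ∀ s a, R s a ∈ Set.Icc (0 : ℝ) 1
  hγ : γ ∈ Set.Ioo (0 : ℝ) 1

variable {S A : Type*} [Fintype S] [Fintype A] [Nonempty S] [Nonempty A]

/-- The Bellman operator `H^π` of a policy `pol`. -/
def bellmanPol (M : MDP S A) (pol : S → A → ℝ) (Q : S → A → ℝ) : S → A → ℝ :=
  fun s a => M.R s a + M.γ * ∑ s', M.p s a s' * ∑ a', pol s' a' * Q s' a'

/-- The Bellman optimality operator `H`. -/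
def bellmanOpt (M : MDP S A) (Q : S → A → ℝ) : S → A → ℝ :=
  fun s a => M.R s a + M.γ * ∑ s', M.p s a s' * (⨆ a', Q s' a')

/-- The sup-norm of a vector in `ℝ^{S×A}`. -/
def supNormQ (Q : S → A → ℝ) : ℝ := ⨆ x : S × A, |Q x.1 x.2|

/-- The sup-norm of a vector in `ℝ^S`. -/
def supNormV (V : S → ℝ) : ℝ := ⨆ s : S, |V s|

/-- The value function `V^π` of a policy `pol` with `Q`-function `Qpol`. -/
def valueOf (pol : S → A → ℝ) (Qpol : S → A → ℝ) : S → ℝ := fun s => ∑ a, pol s a * Qpol s a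

/-- The optimal value function `V*` derived from `Q*`. -/
def Vstar (Qstar : S → A → ℝ) : S → ℝ := fun s => ⨆ a, Qstar s a

lemma wsum_le {ι : Type*} [Fintype ι] {w x : ι → ℝ} (hw : w ∈ stdSimplex ℝ ι)
    {c : ℝ} (hx : ∀ i, x i ≤ c) : ∑ i, w i * x i ≤ c := by
  have h1 : ∑ i, w i * x i ≤ ∑ i, w i * c :=
    Finset.sum_le_sum fun i _ => mul_le_mul_of_nonneg_left (hx i) (hw.1 i)
  have h2 : ∑ i : ι, w i * c = c := by rw [← Finset.sum_mul, hw.2, one_mul]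
  linarith

lemma wsum_sub_le {ι : Type*} [Fintype ι] {w x y : ι → ℝ} (hw : w ∈ stdSimplex ℝ ι)
    {c : ℝ} (h : ∀ i, x i - y i ≤ c) : ∑ i, w i * x i - ∑ i, w i * y i ≤ c := by
  have he : ∑ i, w i * x i - ∑ i, w i * y i = ∑ i, w i * (x i - y i) := by
    rw [← Finset.sum_sub_distrib]
    exact Finset.sum_congr rfl fun i _ => by ring
  rw [he]; exact wsum_le hw h

lemma isup_sub_le {ι : Type*} [Fintype ι] [Nonempty ι] {f g : ι → ℝ} {c : ℝ}
    (h : ∀ i, f i - g i ≤ c) : (⨆ i, f i) - (⨆ i, g i) ≤ c := by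
  rw [sub_le_iff_le_add]
  refine ciSup_le fun i => ?_
  have h2 : g i ≤ ⨆ j, g j := le_ciSup (Set.Finite.bddAbove (Set.finite_range g)) i
  have := h i
  linarith

lemma bellmanPol_sub_le (M : MDP S A) {pol : S → A → ℝ} (hpol : ∀ s, pol s ∈ stdSimplex ℝ A)
    {Q Q' : S → A → ℝ} {c : ℝ} (h : ∀ s a, Q s a - Q' s a ≤ c) (s : S) (a : A) :
    bellmanPol M pol Q s a - bellmanPol M pol Q' s a ≤ M.γ * c := by
  have hout : (∑ s', M.p s a s' * ∑ a', pol s' a' * Q s' a')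
      - (∑ s', M.p s a s' * ∑ a', pol s' a' * Q' s' a') ≤ c :=
    wsum_sub_le (M.hp s a) fun s' => wsum_sub_le (hpol s') (h s')
  have h2 : M.γ * (∑ s', M.p s a s' * ∑ a', pol s' a' * Q s' a')
      - M.γ * (∑ s', M.p s a s' * ∑ a', pol s' a' * Q' s' a') ≤ M.γ * c := by
    rw [← mul_sub]; exact mul_le_mul_of_nonneg_left hout M.hγ.1.le
  simp only [bellmanPol]
  linarith

lemma bellmanOpt_sub_le (M : MDP S A) {Q Q' : S → A → ℝ} {c : ℝ}
    (h : ∀ s a, Q s a - Q' s a ≤ c) (s : S) (a : A) :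
    bellmanOpt M Q s a - bellmanOpt M Q' s a ≤ M.γ * c := by
  have hout : (∑ s', M.p s a s' * (⨆ a', Q s' a'))
      - (∑ s', M.p s a s' * (⨆ a', Q' s' a')) ≤ c :=
    wsum_sub_le (M.hp s a) fun s' => isup_sub_le (h s')
  have h2 : M.γ * (∑ s', M.p s a s' * (⨆ a', Q s' a'))
      - M.γ * (∑ s', M.p s a s' * (⨆ a', Q' s' a')) ≤ M.γ * c := by
    rw [← mul_sub]; exact mul_le_mul_of_nonneg_left hout M.hγ.1.le
  simp only [bellmanOpt]
  linarith

lemma bellmanPol_le_opt (M : MDP S A) {pol : S → A → ℝ} (hpol : ∀ s, pol s ∈ stdSimplex ℝ A)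
    (Q : S → A → ℝ) (s : S) (a : A) : bellmanPol M pol Q s a ≤ bellmanOpt M Q s a := by
  have hin : ∀ s', (∑ a', pol s' a' * Q s' a') ≤ ⨆ a', Q s' a' := fun s' =>
    wsum_le (hpol s') fun a' => le_ciSup (Set.Finite.bddAbove (Set.finite_range _)) a'
  have hout : (∑ s', M.p s a s' * ∑ a', pol s' a' * Q s' a')
      ≤ ∑ s', M.p s a s' * (⨆ a', Q s' a') :=
    Finset.sum_le_sum fun s' _ => mul_le_mul_of_nonneg_left (hin s') ((M.hp s a).1 s')
  have h2 := mul_le_mul_of_nonneg_left hout M.hγ.1.le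
  simp only [bellmanPol, bellmanOpt]
  linarith

lemma le_fixedPoint (M : MDP S A) {pol Qp Q : S → A → ℝ} (hpol : ∀ s, pol s ∈ stdSimplex ℝ A)
    (hfix : bellmanPol M pol Qp = Qp) (h : ∀ s a, Q s a ≤ bellmanPol M pol Q s a) :
    ∀ s a, Q s a ≤ Qp s a := by
  obtain ⟨hγ0, hγ1⟩ := M.hγ
  set c := ⨆ x : S × A, (Q x.1 x.2 - Qp x.1 x.2) with hc
  have hle : ∀ s a, Q s a - Qp s a ≤ c := fun s a =>
    le_ciSup (f := fun x : S × A => Q x.1 x.2 - Qp x.1 x.2)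
      (Set.Finite.bddAbove (Set.finite_range _)) (⟨s, a⟩ : S × A)
  have hd : ∀ s a, Q s a - Qp s a ≤ M.γ * c := by
    intro s a
    have h1 := bellmanPol_sub_le M hpol hle s a
    have h2 : bellmanPol M pol Qp s a = Qp s a := by rw [hfix]
    have h3 := h s a
    linarith
  have hcc : c ≤ M.γ * c := ciSup_le fun x => hd x.1 x.2
  have hc0 : c ≤ 0 := by
    by_contra hpos
    push_neg at hpos
    have : M.γ * c < 1 * c := mul_lt_mul_of_pos_right hγ1 hpos
    linarith
  intro s a
  nlinarith [hd s a, hγ0.le, hc0]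

lemma fixedPoint_le_opt (M : MDP S A) {pol Qp Qstar : S → A → ℝ}
    (hpol : ∀ s, pol s ∈ stdSimplex ℝ A)
    (hfix : bellmanPol M pol Qp = Qp) (hQstar : bellmanOpt M Qstar = Qstar) :
    ∀ s a, Qp s a ≤ Qstar s a := by
  obtain ⟨hγ0, hγ1⟩ := M.hγ
  set c := ⨆ x : S × A, (Qp x.1 x.2 - Qstar x.1 x.2) with hc
  have hle : ∀ s a, Qp s a - Qstar s a ≤ c := fun s a =>
    le_ciSup (f := fun x : S × A => Qp x.1 x.2 - Qstar x.1 x.2)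
      (Set.Finite.bddAbove (Set.finite_range _)) (⟨s, a⟩ : S × A)
  have hd : ∀ s a, Qp s a - Qstar s a ≤ M.γ * c := by
    intro s a
    have h1 := bellmanPol_sub_le M hpol hle s a
    have h2 := bellmanPol_le_opt M hpol Qstar s a
    have h3 : bellmanPol M pol Qp s a = Qp s a := by rw [hfix]
    have h4 : bellmanOpt M Qstar s a = Qstar s a := by rw [hQstar]
    linarith
  have hcc : c ≤ M.γ * c := ciSup_le fun x => hd x.1 x.2
  have hc0 : c ≤ 0 := by
    by_contra hpos
    push_neg at hpos
    have : M.γ * c < 1 * c := mul_lt_mul_of_pos_right hγ1 hpos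
    linarith
  intro s a
  nlinarith [hd s a, hγ0.le, hc0]

lemma supNormQ_le' {Q : S → A → ℝ} {c : ℝ} (h : ∀ s a, |Q s a| ≤ c) : supNormQ Q ≤ c :=
  ciSup_le fun x => h x.1 x.2

lemma abs_le_supNormQ (Q : S → A → ℝ) (s : S) (a : A) : |Q s a| ≤ supNormQ Q :=
  le_ciSup (f := fun x : S × A => |Q x.1 x.2|)
    (Set.Finite.bddAbove (Set.finite_range _)) (⟨s, a⟩ : S × A)

lemma supNormQ_nonneg (Q : S → A → ℝ) : 0 ≤ supNormQ Q :=
  le_trans (abs_nonneg _) (abs_le_supNormQ Q (Classical.arbitrary S) (Classical.arbitrary A))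

lemma bellmanPol_combo (M : MDP S A) (pol : S → A → ℝ) (Q Q' : S → A → ℝ) (t : ℝ)
    (s : S) (a : A) :
    bellmanPol M pol ((1 - t) • Q + t • Q') s a
      = (1 - t) * bellmanPol M pol Q s a + t * bellmanPol M pol Q' s a := by
  simp only [bellmanPol]
  have hin : ∀ s', (∑ a', pol s' a' * (((1 - t) • Q + t • Q') s' a'))
      = (1 - t) * (∑ a', pol s' a' * Q s' a') + t * (∑ a', pol s' a' * Q' s' a') := by
    intro s'
    rw [Finset.mul_sum, Finset.mul_sum, ← Finset.sum_add_distrib]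
    refine Finset.sum_congr rfl fun a' _ => ?_
    simp only [Pi.add_apply, Pi.smul_apply, smul_eq_mul]
    ring
  have h1 : (∑ s', M.p s a s' * ∑ a', pol s' a' * (((1 - t) • Q + t • Q') s' a'))
      = ∑ s', ((1 - t) * (M.p s a s' * ∑ a', pol s' a' * Q s' a')
          + t * (M.p s a s' * ∑ a', pol s' a' * Q' s' a')) := by
    refine Finset.sum_congr rfl fun s' _ => ?_
    rw [hin s']; ring
  rw [h1, Finset.sum_add_distrib, ← Finset.mul_sum, ← Finset.mul_sum]
  ring

/-- **Certificate decrease for dual-averaged policy iteration** (Lemma 6). -/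
theorem dpi_certificate_decrease
    (M : MDP S A)
    (β : ℕ → ℝ) (hβ0 : β 0 = 1) (hβ : ∀ k ≥ 1, β k ∈ Set.Ioc (0 : ℝ) 1)
    (pol : ℕ → S → A → ℝ) (hpol : ∀ k s, pol k s ∈ stdSimplex ℝ A)
    (Qpi : ℕ → S → A → ℝ)
    (hQpi : ∀ k, bellmanPol M (pol k) (Qpi k) = Qpi k)
    (Qbar : ℕ → S → A → ℝ) (hQbar0 : Qbar 0 = 0)
    (hQbarSucc : ∀ k, Qbar (k + 1) = (1 - β k) • Qbar k + β k • Qpi k)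
    (hgreedy : ∀ k, bellmanPol M (pol (k + 1)) (Qbar (k + 1)) = bellmanOpt M (Qbar (k + 1)))
    (Qstar : S → A → ℝ) (hQstar : bellmanOpt M Qstar = Qstar) :
    ∀ k ≥ 1,
      supNormQ (Qstar - bellmanPol M (pol k) Qstar)
        ≤ (2 * M.γ / (1 - M.γ)) * (∏ i ∈ Finset.Icc 1 (k - 1), (1 - (1 - M.γ) * β i))
          * supNormQ (Qstar - bellmanPol M (pol 0) Qstar) := by
  obtain ⟨hγ0, hγ1⟩ := M.hγ
  set a0 := supNormQ (Qstar - bellmanPol M (pol 0) Qstar) with ha0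
  set b : ℕ → ℝ := fun k => supNormQ (Qstar - Qbar k) with hbdef
  have hb_abs : ∀ k s a, |Qstar s a - Qbar k s a| ≤ b k := fun k s a =>
    abs_le_supNormQ (Qstar - Qbar k) s a
  have hbnn : ∀ k, 0 ≤ b k := fun k => supNormQ_nonneg _
  have hQpiStar : ∀ k s a, Qpi k s a ≤ Qstar s a := fun k =>
    fixedPoint_le_opt M (hpol k) (hQpi k) hQstar
  have hQbar1 : Qbar 1 = Qpi 0 := by
    rw [hQbarSucc 0, hβ0, hQbar0]; simp
  have hgr : ∀ k, 1 ≤ k → bellmanPol M (pol k) (Qbar k) = bellmanOpt M (Qbar k) := by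
    intro k hk
    obtain ⟨m, rfl⟩ := Nat.exists_eq_add_of_le hk
    rw [Nat.add_comm 1 m]
    exact hgreedy m
  -- superharmonicity of Qbar k for k ≥ 1
  have hsuper : ∀ k, 1 ≤ k → ∀ s a, Qbar k s a ≤ bellmanOpt M (Qbar k) s a := by
    intro k hk
    induction k, hk using Nat.le_induction with
    | base =>
      rw [hQbar1]
      intro s a
      have h1 := bellmanPol_le_opt M (hpol 0) (Qpi 0) s a
      have h2 : bellmanPol M (pol 0) (Qpi 0) s a = Qpi 0 s a := by rw [hQpi 0]
      linarith
    | succ k hk ih =>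
      obtain ⟨hβpos, hβle⟩ := hβ k hk
      have hble : ∀ s a, Qbar k s a ≤ Qpi k s a := by
        refine le_fixedPoint M (hpol k) (hQpi k) fun s a => ?_
        have := ih s a
        rw [hgr k hk]
        exact this
      intro s a
      have key1 : bellmanPol M (pol k) (Qbar (k+1)) s a ≤ bellmanOpt M (Qbar (k+1)) s a :=
        bellmanPol_le_opt M (hpol k) _ s a
      have key2 : bellmanPol M (pol k) (Qbar (k+1)) s a
          = (1 - β k) * bellmanPol M (pol k) (Qbar k) s a
            + β k * bellmanPol M (pol k) (Qpi k) s a := by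
        rw [hQbarSucc k]; exact bellmanPol_combo M (pol k) (Qbar k) (Qpi k) (β k) s a
      have key3 : bellmanPol M (pol k) (Qbar k) s a = bellmanOpt M (Qbar k) s a := by
        rw [hgr k hk]
      have key4 : bellmanPol M (pol k) (Qpi k) s a = Qpi k s a := by rw [hQpi k]
      have key5 : Qbar (k+1) s a = (1 - β k) * Qbar k s a + β k * Qpi k s a := by
        rw [hQbarSucc k]; simp [Pi.add_apply, Pi.smul_apply, smul_eq_mul]
      have key6 := ih s a
      nlinarith [mul_le_mul_of_nonneg_left key6 (by linarith : (0:ℝ) ≤ 1 - β k)]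
  have hble : ∀ k, 1 ≤ k → ∀ s a, Qbar k s a ≤ Qpi k s a := by
    intro k hk
    refine le_fixedPoint M (hpol k) (hQpi k) fun s a => ?_
    have := hsuper k hk s a
    rw [hgr k hk]
    exact this
  have hQbar_star : ∀ k, 1 ≤ k → ∀ s a, 0 ≤ Qstar s a - Qbar k s a := by
    intro k hk s a
    have := hble k hk s a
    have := hQpiStar k s a
    linarith
  -- Q* - Qpi k ≤ γ * b k for k ≥ 1
  have hQpi_ge : ∀ k, 1 ≤ k → ∀ s a, Qstar s a - Qpi k s a ≤ M.γ * b k := by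
    intro k hk s a
    have h1 : ∀ s a, Qstar s a - Qbar k s a ≤ b k := fun s a => (abs_le.mp (hb_abs k s a)).2
    have h2 := bellmanOpt_sub_le M (Q := Qstar) (Q' := Qbar k) h1 s a
    have h3 : bellmanOpt M (Qbar k) s a = bellmanPol M (pol k) (Qbar k) s a := by
      rw [hgr k hk]
    have h4 : bellmanPol M (pol k) (Qbar k) s a - bellmanPol M (pol k) (Qpi k) s a
        ≤ M.γ * 0 :=
      bellmanPol_sub_le M (hpol k) (fun s a => by linarith [hble k hk s a]) s a
    have h5 : bellmanPol M (pol k) (Qpi k) s a = Qpi k s a := by rw [hQpi k]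
    have h6 : bellmanOpt M Qstar s a = Qstar s a := by rw [hQstar]
    linarith
  -- contraction step
  have hstep : ∀ k, 1 ≤ k → b (k+1) ≤ (1 - (1 - M.γ) * β k) * b k := by
    intro k hk
    obtain ⟨hβpos, hβle⟩ := hβ k hk
    have hco : 0 ≤ 1 - (1 - M.γ) * β k := by nlinarith
    refine supNormQ_le' fun s a => ?_
    have e : (Qstar - Qbar (k+1)) s a
        = (1 - β k) * (Qstar s a - Qbar k s a) + β k * (Qstar s a - Qpi k s a) := by
      show Qstar s a - Qbar (k+1) s a = _
      rw [hQbarSucc k]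
      simp only [Pi.add_apply, Pi.smul_apply, smul_eq_mul]
      ring
    rw [e, abs_le]
    have h1 := hQbar_star k hk s a
    have h2 := (abs_le.mp (hb_abs k s a)).2
    have h3 : 0 ≤ Qstar s a - Qpi k s a := by linarith [hQpiStar k s a]
    have h4 := hQpi_ge k hk s a
    constructor
    · nlinarith [mul_nonneg hco (hbnn k), mul_nonneg (by linarith : (0:ℝ) ≤ 1 - β k) h1,
        mul_nonneg hβpos.le h3]
    · nlinarith [mul_le_mul_of_nonneg_left h2 (by linarith : (0:ℝ) ≤ 1 - β k),
        mul_le_mul_of_nonneg_left h4 hβpos.le]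
  -- b 1 bound
  have hb1 : (1 - M.γ) * b 1 ≤ a0 := by
    have hbd : b 1 ≤ a0 + M.γ * b 1 := by
      refine supNormQ_le' fun s a => ?_
      have e : (Qstar - Qbar 1) s a = Qstar s a - Qpi 0 s a := by
        show Qstar s a - Qbar 1 s a = _
        rw [hQbar1]
      have h1 : 0 ≤ Qstar s a - Qpi 0 s a := by linarith [hQpiStar 0 s a]
      have h2 : Qstar s a - bellmanPol M (pol 0) Qstar s a ≤ a0 :=
        (abs_le.mp (abs_le_supNormQ (Qstar - bellmanPol M (pol 0) Qstar) s a)).2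
      have hd : ∀ s a, Qstar s a - Qpi 0 s a ≤ b 1 := by
        intro s a
        have := (abs_le.mp (hb_abs 1 s a)).2
        rw [hQbar1] at this
        exact this
      have h3 : bellmanPol M (pol 0) Qstar s a - bellmanPol M (pol 0) (Qpi 0) s a
          ≤ M.γ * b 1 := bellmanPol_sub_le M (hpol 0) hd s a
      have h4 : bellmanPol M (pol 0) (Qpi 0) s a = Qpi 0 s a := by rw [hQpi 0]
      rw [e, abs_le]
      have ha0nn : 0 ≤ a0 := supNormQ_nonneg _
      have : 0 ≤ M.γ * b 1 := mul_nonneg hγ0.le (hbnn 1)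
      constructor <;> linarith
    nlinarith
  -- product bound
  have hprod : ∀ k, 1 ≤ k →
      b k ≤ (∏ i ∈ Finset.Icc 1 (k - 1), (1 - (1 - M.γ) * β i)) * b 1 := by
    intro k hk
    induction k, hk using Nat.le_induction with
    | base =>
      have he : Finset.Icc 1 (1 - 1) = (∅ : Finset ℕ) := by
        apply Finset.Icc_eq_empty; omega
      rw [he]
      simp
    | succ k hk ih =>
      have hfac : 0 ≤ 1 - (1 - M.γ) * β k := by
        obtain ⟨hβpos, hβle⟩ := hβ k hk
        nlinarith
      have he : (∏ i ∈ Finset.Icc 1 (k + 1 - 1), (1 - (1 - M.γ) * β i))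
          = (∏ i ∈ Finset.Icc 1 (k - 1), (1 - (1 - M.γ) * β i)) * (1 - (1 - M.γ) * β k) := by
        obtain ⟨m, rfl⟩ : ∃ m, k = m + 1 := ⟨k - 1, (Nat.succ_pred_eq_of_pos hk).symm⟩
        have h1 : m + 1 + 1 - 1 = m + 1 := rfl
        have h2 : m + 1 - 1 = m := rfl
        rw [h1, h2, Finset.prod_Icc_succ_top (by omega : 1 ≤ m + 1)]
      rw [he]
      have hs := hstep k hk
      calc b (k + 1) ≤ (1 - (1 - M.γ) * β k) * b k := hs
        _ ≤ (1 - (1 - M.γ) * β k)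
            * ((∏ i ∈ Finset.Icc 1 (k - 1), (1 - (1 - M.γ) * β i)) * b 1) :=
          mul_le_mul_of_nonneg_left ih hfac
        _ = (∏ i ∈ Finset.Icc 1 (k - 1), (1 - (1 - M.γ) * β i))
            * (1 - (1 - M.γ) * β k) * b 1 := by ring
  -- conclusion
  intro k hk
  set P := ∏ i ∈ Finset.Icc 1 (k - 1), (1 - (1 - M.γ) * β i) with hP
  have hPnn : 0 ≤ P := by
    refine Finset.prod_nonneg fun i hi => ?_
    have hi1 : 1 ≤ i := (Finset.mem_Icc.mp hi).1
    obtain ⟨hβpos, hβle⟩ := hβ i hi1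
    nlinarith
  have hfin : ∀ s a, |(Qstar - bellmanPol M (pol k) Qstar) s a| ≤ 2 * M.γ * b k := by
    intro s a
    have h1 : ∀ s a, Qstar s a - Qbar k s a ≤ b k := fun s a => (abs_le.mp (hb_abs k s a)).2
    have h1' : ∀ s a, Qbar k s a - Qstar s a ≤ b k := fun s a => by
      linarith [(abs_le.mp (hb_abs k s a)).1]
    have h2 := bellmanOpt_sub_le M (Q := Qstar) (Q' := Qbar k) h1 s a
    have h3 := bellmanPol_sub_le M (hpol k) (Q := Qbar k) (Q' := Qstar) h1' s a
    have h4 : bellmanOpt M (Qbar k) s a = bellmanPol M (pol k) (Qbar k) s a := by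
      rw [hgr k hk]
    have h5 : bellmanOpt M Qstar s a = Qstar s a := by rw [hQstar]
    have h6 := bellmanPol_le_opt M (hpol k) Qstar s a
    show |Qstar s a - bellmanPol M (pol k) Qstar s a| ≤ _
    rw [abs_le]
    have hnn : 0 ≤ 2 * M.γ * b k := mul_nonneg (by linarith) (hbnn k)
    constructor
    · linarith
    · linarith
  have hA : supNormQ (Qstar - bellmanPol M (pol k) Qstar) ≤ 2 * M.γ * b k :=
    supNormQ_le' hfin
  have hBk := hprod k hk
  have h1γ : 0 < 1 - M.γ := by linarith
  have hmid : 2 * M.γ * b k ≤ 2 * M.γ * (P * b 1) :=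
    mul_le_mul_of_nonneg_left hBk (by linarith)
  have hlast : 2 * M.γ * (P * b 1) ≤ 2 * M.γ / (1 - M.γ) * P * a0 := by
    have hkey : 2 * M.γ * P * ((1 - M.γ) * b 1) ≤ 2 * M.γ * P * a0 :=
      mul_le_mul_of_nonneg_left hb1 (mul_nonneg (by linarith) hPnn)
    rw [div_mul_eq_mul_div, div_mul_eq_mul_div, le_div_iff₀ h1γ]
    nlinarith [hkey]
  calc supNormQ (Qstar - bellmanPol M (pol k) Qstar) ≤ 2 * M.γ * b k := hA
    _ ≤ 2 * M.γ * (P * b 1) := hmid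
    _ ≤ 2 * M.γ / (1 - M.γ) * P * a0 := hlast
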